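/- Let p ≥ 2 and n ≥ 1 be integers and m_1 ≤ m_2 ≤ ⋯ ≤ m_n positive integers. Then (p−1)·p^{n−1} · ∑_{k=1}^{n} (−1)^{k−1} ∑_{i=1}^{n−k+1} C(n−i, k−1) · (p−1)^{k−1} · p^{1−k} · (m_i+1) = ∑_{l=0}^{n−1} (p−1)·p^l·(m_{l+1}+1), where C(a,b) denotes the binomial coefficient (the equality holds in the rationals). -/

import Mathlib

lemma gdie_key (p : ℚ) (hp : p ≠ 0) (N : ℕ) :
    ∑ k ∈ Finset.Icc 1 (N + 1), (-1 : ℚ) ^ (k - 1) *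
        ((N.choose (k - 1) : ℚ) * (p - 1) ^ (k - 1) * (p ^ (k - 1))⁻¹)
      = (p ^ N)⁻¹ := by
  rw [← Finset.Ico_add_one_right_eq_Icc, Finset.sum_Ico_eq_sum_range]
  have h1 : N + 1 + 1 - 1 = N + 1 := by omega
  rw [h1]
  have h : ∀ j ∈ Finset.range (N + 1),
      (-1 : ℚ) ^ (1 + j - 1) * ((N.choose (1 + j - 1) : ℚ) * (p - 1) ^ (1 + j - 1) *
        (p ^ (1 + j - 1))⁻¹)
        = ((1 - p) / p) ^ j * 1 ^ (N - j) * (N.choose j : ℚ) := by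
    intro j _
    have h2 : 1 + j - 1 = j := by omega
    rw [h2, one_pow, mul_one, div_pow, ← inv_pow]
    have : ((1 - p) ^ j : ℚ) = (-1) ^ j * (p - 1) ^ j := by
      rw [← neg_pow]; ring_nf
    rw [this, inv_pow]
    ring
  rw [Finset.sum_congr rfl h, ← add_pow]
  have : (1 - p) / p + 1 = p⁻¹ := by field_simp; ring
  rw [this, inv_pow]

theorem generic_different_inclusion_exclusion
    (p : ℕ) (hp : 2 ≤ p) (n : ℕ) (hn : 1 ≤ n)
    (m : ℕ → ℕ) (hmpos : ∀ i, 1 ≤ i → i ≤ n → 0 < m i)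
    (hm : ∀ i, 1 ≤ i → i < n → m i ≤ m (i + 1)) :
    ((p : ℚ) - 1) * (p : ℚ) ^ (n - 1) *
        ∑ k ∈ Finset.Icc 1 n, (-1 : ℚ) ^ (k - 1) *
          ∑ i ∈ Finset.Icc 1 (n - k + 1),
            ((n - i).choose (k - 1) : ℚ) * ((p : ℚ) - 1) ^ (k - 1)
              * ((p : ℚ) ^ (k - 1))⁻¹ * ((m i : ℚ) + 1)
      = ∑ l ∈ Finset.range n, ((p : ℚ) - 1) * (p : ℚ) ^ l * ((m (l + 1) : ℚ) + 1) := by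
  have hp0 : (p : ℚ) ≠ 0 := by
    have : 0 < p := by omega
    exact_mod_cast this.ne'
  -- push (-1)^(k-1) inside the inner sum
  have step1 : ∑ k ∈ Finset.Icc 1 n, (-1 : ℚ) ^ (k - 1) *
          ∑ i ∈ Finset.Icc 1 (n - k + 1),
            ((n - i).choose (k - 1) : ℚ) * ((p : ℚ) - 1) ^ (k - 1)
              * ((p : ℚ) ^ (k - 1))⁻¹ * ((m i : ℚ) + 1)
      = ∑ i ∈ Finset.Icc 1 n, (∑ k ∈ Finset.Icc 1 (n - i + 1),
            (-1 : ℚ) ^ (k - 1) * (((n - i).choose (k - 1) : ℚ) * ((p : ℚ) - 1) ^ (k - 1)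
              * ((p : ℚ) ^ (k - 1))⁻¹)) * ((m i : ℚ) + 1) := by
    simp_rw [Finset.mul_sum]
    rw [Finset.sum_comm' (t' := Finset.Icc 1 n) (s' := fun i => Finset.Icc 1 (n - i + 1))]
    · refine Finset.sum_congr rfl fun i _ => ?_
      rw [Finset.sum_mul]
      refine Finset.sum_congr rfl fun k _ => ?_
      ring
    · intro k i
      simp only [Finset.mem_Icc]
      omega
  rw [step1]
  have step2 : ∀ i ∈ Finset.Icc 1 n,
      (∑ k ∈ Finset.Icc 1 (n - i + 1),
            (-1 : ℚ) ^ (k - 1) * (((n - i).choose (k - 1) : ℚ) * ((p : ℚ) - 1) ^ (k - 1)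
              * ((p : ℚ) ^ (k - 1))⁻¹)) * ((m i : ℚ) + 1)
        = ((p : ℚ) ^ (n - i))⁻¹ * ((m i : ℚ) + 1) := by
    intro i _
    rw [gdie_key (p : ℚ) hp0 (n - i)]
  rw [Finset.sum_congr rfl step2, Finset.mul_sum]
  have step3 : ∀ i ∈ Finset.Icc 1 n,
      ((p : ℚ) - 1) * (p : ℚ) ^ (n - 1) * (((p : ℚ) ^ (n - i))⁻¹ * ((m i : ℚ) + 1))
        = ((p : ℚ) - 1) * (p : ℚ) ^ (i - 1) * ((m i : ℚ) + 1) := by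
    intro i hi
    simp only [Finset.mem_Icc] at hi
    have hpow : (p : ℚ) ^ (n - 1) = (p : ℚ) ^ (n - i) * (p : ℚ) ^ (i - 1) := by
      rw [← pow_add]
      congr 1
      omega
    rw [hpow]
    field_simp
  rw [Finset.sum_congr rfl step3]
  rw [← Finset.Ico_add_one_right_eq_Icc, Finset.sum_Ico_eq_sum_range]
  have h1 : n + 1 - 1 = n := by omega
  rw [h1]
  refine Finset.sum_congr rfl fun j _ => ?_
  have h2 : 1 + j - 1 = j := by omega
  rw [h2, Nat.add_comm 1 j]
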